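/- Soundness and completeness for quasi-NDMs: A formula φ ∈ L is derivable in the logic LDA if and only if φ is valid for the class of quasi-notional doxastic models (equivalently: φ is LDA-consistent if and only if φ is satisfiable for the class of quasi-NDMs). -/

import Mathlib

namespace LDAPaper

/-- Formulas over atomic propositions `ℕ` and agents `Agt`.
`expbel i α` is the explicit belief operator `△ᵢ α`; `impbel i φ` is the implicit
belief operator `□ᵢ φ`. -/
inductive Frm (Agt : Type) : Type
  | atom : ℕ → Frm Agt
  | neg : Frm Agt → Frm Agt
  | and : Frm Agt → Frm Agt → Frm Agt
  | expbel : Agt → Frm Agt → Frm Agt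
  | impbel : Agt → Frm Agt → Frm Agt

namespace Frm

variable {Agt : Type}

/-- Membership in the sublanguage `L0` (no implicit-belief operator). -/
def isL0 : Frm Agt → Prop
  | atom _ => True
  | neg α => isL0 α
  | and α β => isL0 α ∧ isL0 β
  | expbel _ α => isL0 α
  | impbel _ _ => False

/-- Membership in the language `L`: the explicit belief operator applies only to
`L0`-formulas. -/
def isL : Frm Agt → Prop
  | atom _ => True
  | neg φ => isL φ
  | and φ ψ => isL φ ∧ isL ψ
  | expbel _ α => isL0 α
  | impbel _ φ => isL φ

/-- Material implication, defined from `¬` and `∧` as usual. -/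
def imp (φ ψ : Frm Agt) : Frm Agt := neg (and φ (neg ψ))

/-- Disjunction, defined from `¬` and `∧` as usual. -/
def or (φ ψ : Frm Agt) : Frm Agt := neg (and (neg φ) (neg ψ))

/-- Biconditional, defined from `¬` and `∧` as usual. -/
def iff (φ ψ : Frm Agt) : Frm Agt := and (imp φ ψ) (imp ψ φ)

/-- The set of atomic propositions occurring in a formula. -/
def atomsOf : Frm Agt → Set ℕ
  | atom p => {p}
  | neg φ => atomsOf φ
  | and φ ψ => atomsOf φ ∪ atomsOf ψ
  | expbel _ φ => atomsOf φ
  | impbel _ φ => atomsOf φ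

end Frm

/-- A model `(W, D, N, V)`: worlds, doxastic function, notional function, valuation. -/
structure PreNDM (Agt : Type) where
  W : Type
  D : Agt → W → Set (Frm Agt)
  N : Agt → W → Set W
  V : ℕ → Set W

namespace PreNDM

variable {Agt : Type}

/-- Truth of a formula at a world of a model. -/
def sat (M : PreNDM Agt) : M.W → Frm Agt → Prop
  | w, .atom p => w ∈ M.V p
  | w, .neg φ => ¬ sat M w φ
  | w, .and φ ψ => sat M w φ ∧ sat M w ψ
  | w, .expbel i α => α ∈ M.D i w
  | w, .impbel i φ => ∀ v ∈ M.N i w, sat M v φ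

end PreNDM

/-- Quasi-notional doxastic model: belief bases consist of `L0`-formulas,
(C1*) `N(i,w) ⊆ ∩_{α ∈ D(i,w)} ‖α‖`, and (C2) `N(i,w) ≠ ∅`. -/
def isQNDM {Agt : Type} (M : PreNDM Agt) : Prop :=
  (∀ i w, ∀ α ∈ M.D i w, α.isL0) ∧
  (∀ i w, ∀ v ∈ M.N i w, ∀ α ∈ M.D i w, M.sat v α) ∧
  (∀ i w, (M.N i w).Nonempty)

/-- Notional doxastic model: belief bases consist of `L0`-formulas,
(C1) `N(i,w) = ∩_{α ∈ D(i,w)} ‖α‖`, and (C2) `N(i,w) ≠ ∅`. -/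
def isNDM {Agt : Type} (M : PreNDM Agt) : Prop :=
  (∀ i w, ∀ α ∈ M.D i w, α.isL0) ∧
  (∀ i w, M.N i w = {v | ∀ α ∈ M.D i w, M.sat v α}) ∧
  (∀ i w, (M.N i w).Nonempty)

/-- A model is finite iff `W` is finite and every `D(i,w)` and every
`{p ∈ Atm : w ∈ V(p)}` is finite. -/
def finiteModel {Agt : Type} (M : PreNDM Agt) : Prop :=
  Finite M.W ∧ (∀ i w, (M.D i w).Finite) ∧ (∀ w, {p : ℕ | w ∈ M.V p}.Finite)

end LDAPaper
namespace LDAPaper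

/-- A multi-agent belief base `B = (B_1,…,B_n, V)`. -/
structure MABase (Agt : Type) where
  B : Agt → Set (Frm Agt)
  V : Set ℕ

namespace MABase

variable {Agt : Type}

/-- Satisfaction of `L0`-formulas by a multi-agent belief base. -/
def bsat (b : MABase Agt) : Frm Agt → Prop
  | .atom p => p ∈ b.V
  | .neg α => ¬ bsat b α
  | .and α β => bsat b α ∧ bsat b β
  | .expbel i α => α ∈ b.B i
  | .impbel _ _ => True

/-- Well-formedness: each agent's belief base consists of `L0`-formulas. -/
def wf (b : MABase Agt) : Prop := ∀ i, ∀ α ∈ b.B i, α.isL0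

/-- Doxastic alternative relation: `b R_i b'` iff `b'` satisfies every formula in
agent `i`'s belief base in `b`. -/
def R (i : Agt) (b b' : MABase Agt) : Prop := ∀ α ∈ b.B i, bsat b' α

end MABase

/-- Satisfaction of `L`-formulas by a multi-agent belief model `(b, Cxt)`. -/
def msat {Agt : Type} (Cxt : Set (MABase Agt)) : MABase Agt → Frm Agt → Prop
  | b, .atom p => p ∈ b.V
  | b, .neg φ => ¬ msat Cxt b φ
  | b, .and φ ψ => msat Cxt b φ ∧ msat Cxt b ψ
  | b, .expbel i α => α ∈ b.B i
  | b, .impbel i φ => ∀ b' ∈ Cxt, MABase.R i b b' → msat Cxt b' φ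

/-- Consistent multi-agent belief model: all bases involved are well formed and
for every agent `i` and every `b' ∈ Cxt ∪ {b}` there is `b'' ∈ Cxt` with `b' R_i b''`. -/
def isCMAB {Agt : Type} (b : MABase Agt) (Cxt : Set (MABase Agt)) : Prop :=
  (∀ b' ∈ insert b Cxt, b'.wf) ∧
  (∀ i : Agt, ∀ b' ∈ insert b Cxt, ∃ b'' ∈ Cxt, MABase.R i b' b'')

/-- Boolean evaluation of a formula, treating atoms, explicit-belief formulas and
implicit-belief formulas as propositional atoms. -/
def boolEval {Agt : Type} (v : Frm Agt → Bool) : Frm Agt → Bool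
  | .neg φ => ! boolEval v φ
  | .and φ ψ => boolEval v φ && boolEval v ψ
  | φ => v φ

/-- Instances of classical propositional tautologies. -/
def Tautology {Agt : Type} (φ : Frm Agt) : Prop :=
  ∀ v : Frm Agt → Bool, boolEval v φ = true

/-- Derivability in the logic LDA: classical propositional logic over `L` plus
axioms K, D, Int and the necessitation rule for implicit belief. -/
inductive LDA {Agt : Type} : Frm Agt → Prop
  | taut {φ : Frm Agt} : φ.isL → Tautology φ → LDA φ
  | axK (i : Agt) {φ ψ : Frm Agt} : φ.isL → ψ.isL →
      LDA (((Frm.impbel i φ).and (Frm.impbel i (φ.imp ψ))).imp (Frm.impbel i ψ))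
  | axD (i : Agt) {φ : Frm Agt} : φ.isL →
      LDA (Frm.neg ((Frm.impbel i φ).and (Frm.impbel i (Frm.neg φ))))
  | axInt (i : Agt) {α : Frm Agt} : α.isL0 →
      LDA ((Frm.expbel i α).imp (Frm.impbel i α))
  | mp {φ ψ : Frm Agt} : LDA (φ.imp ψ) → LDA φ → LDA ψ
  | nec (i : Agt) {φ : Frm Agt} : LDA φ → LDA (Frm.impbel i φ)

/-- Conjunction of a list of formulas (the empty conjunction is a tautology). -/
def conjList {Agt : Type} : List (Frm Agt) → Frm Agt
  | [] => Frm.neg ((Frm.atom 0).and (Frm.neg (Frm.atom 0)))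
  | φ :: l => φ.and (conjList l)

/-- A set of formulas is LDA-consistent iff no contradiction is derivable in LDA
from finitely many of its members. -/
def Consistent {Agt : Type} (Δ : Set (Frm Agt)) : Prop :=
  ∀ l : List (Frm Agt), (∀ ψ ∈ l, ψ ∈ Δ) → ¬ LDA (Frm.neg (conjList l))

/-- Maximally LDA-consistent set of `L`-formulas. -/
def MCS {Agt : Type} (Γ : Set (Frm Agt)) : Prop :=
  (∀ φ ∈ Γ, φ.isL) ∧ Consistent Γ ∧
    ∀ Δ : Set (Frm Agt), (∀ φ ∈ Δ, φ.isL) → Consistent Δ → Γ ⊆ Δ → Δ = Γ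

/-- Canonical doxastic function: `α ∈ D^c(i,w)` iff `△ᵢα ∈ w`. -/
def canonD {Agt : Type} (i : Agt) (w : {Γ : Set (Frm Agt) // MCS Γ}) : Set (Frm Agt) :=
  {α | Frm.expbel i α ∈ w.val}

/-- Canonical notional function: `v ∈ N^c(i,w)` iff `□ᵢφ ∈ w` implies `φ ∈ v`. -/
def canonN {Agt : Type} (i : Agt) (w : {Γ : Set (Frm Agt) // MCS Γ}) :
    Set {Γ : Set (Frm Agt) // MCS Γ} :=
  {v | ∀ φ : Frm Agt, Frm.impbel i φ ∈ w.val → φ ∈ v.val}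

/-- Canonical valuation: `w ∈ V^c(p)` iff `p ∈ w`. -/
def canonV {Agt : Type} (p : ℕ) : Set {Γ : Set (Frm Agt) // MCS Γ} :=
  {w | Frm.atom p ∈ w.val}

/-- The canonical model of LDA: worlds are the maximally LDA-consistent sets. -/
def canonM (Agt : Type) : PreNDM Agt where
  W := {Γ : Set (Frm Agt) // MCS Γ}
  D := canonD
  N := canonN
  V := canonV

/-- `w ≡_Σ v` iff `w` and `v` satisfy the same formulas of `Σ`. -/
def filtRel {Agt : Type} (M : PreNDM Agt) (S : Set (Frm Agt)) (w v : M.W) : Prop :=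
  ∀ φ ∈ S, (M.sat w φ ↔ M.sat v φ)

/-- The setoid of `≡_Σ`-equivalent worlds. -/
def filtSetoid {Agt : Type} (M : PreNDM Agt) (S : Set (Frm Agt)) : Setoid M.W where
  r := filtRel M S
  iseqv := ⟨fun _ _ _ => Iff.rfl, fun h φ hφ => (h φ hφ).symm,
    fun h1 h2 φ hφ => (h1 φ hφ).trans (h2 φ hφ)⟩

/-- The `≡_Σ`-equivalence class `|w|_Σ` of a world `w`. -/
def filtMk {Agt : Type} (M : PreNDM Agt) (S : Set (Frm Agt)) (w : M.W) :
    Quotient (filtSetoid M S) :=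
  Quotient.mk (filtSetoid M S) w

/-- Closure under subformulas. -/
def SubClosed {Agt : Type} (S : Set (Frm Agt)) : Prop :=
  (∀ φ : Frm Agt, Frm.neg φ ∈ S → φ ∈ S) ∧
  (∀ φ ψ : Frm Agt, Frm.and φ ψ ∈ S → φ ∈ S ∧ ψ ∈ S) ∧
  (∀ (i : Agt) (φ : Frm Agt), Frm.expbel i φ ∈ S → φ ∈ S) ∧
  (∀ (i : Agt) (φ : Frm Agt), Frm.impbel i φ ∈ S → φ ∈ S)

/-- The filtration `M_Σ = (W_Σ, D_Σ, N_Σ, V_Σ)` of `M` through `Σ`: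
`W_Σ` is the quotient of `W` by `≡_Σ`;
`D_Σ(i,|w|) = (∩_{v ∈ |w|} D(i,v)) ∩ Σ`;
`N_Σ(i,|w|) = {|v| : v ∈ N(i,w)}` (smallest filtration);
`V_Σ(p) = {|w| : (M,w) ⊨ p}` if `p` occurs in `Σ`, and `∅` otherwise. -/
def filtModel {Agt : Type} (M : PreNDM Agt) (S : Set (Frm Agt)) : PreNDM Agt where
  W := Quotient (filtSetoid M S)
  D := fun i x => {α | α ∈ S ∧ ∀ v : M.W, filtMk M S v = x → α ∈ M.D i v}
  N := fun i x => {y | ∃ w v : M.W, filtMk M S w = x ∧ filtMk M S v = y ∧ v ∈ M.N i w}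
  V := fun p =>
    {x | (∃ φ ∈ S, p ∈ φ.atomsOf) ∧ ∃ w : M.W, filtMk M S w = x ∧ M.sat w (Frm.atom p)}

/-- The language of Fagin & Halpern's logic of general awareness:
`bel` is implicit belief `B_i`, `aware` is awareness `A_i`, `expk` is explicit
belief `X_i`. -/
inductive LGA (Agt : Type) : Type
  | atom : ℕ → LGA Agt
  | neg : LGA Agt → LGA Agt
  | and : LGA Agt → LGA Agt → LGA Agt
  | bel : Agt → LGA Agt → LGA Agt
  | aware : Agt → LGA Agt → LGA Agt
  | expk : Agt → LGA Agt → LGA Agt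

/-- An awareness structure `(S, R_1,…,R_n, A_1,…,A_n, π)`. -/
structure AwStruct (Agt : Type) where
  S : Type
  R : Agt → S → S → Prop
  A : Agt → S → Set (LGA Agt)
  val : ℕ → Set S

namespace AwStruct

variable {Agt : Type}

/-- Truth in an awareness structure; `X_i φ` holds iff both `B_i φ` and `A_i φ` hold. -/
def sat (M : AwStruct Agt) : M.S → LGA Agt → Prop
  | s, .atom p => s ∈ M.val p
  | s, .neg φ => ¬ sat M s φ
  | s, .and φ ψ => sat M s φ ∧ sat M s ψ
  | s, .bel i φ => ∀ t, M.R i s t → sat M t φ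
  | s, .aware i φ => φ ∈ M.A i s
  | s, .expk i φ => (∀ t, M.R i s t → sat M t φ) ∧ φ ∈ M.A i s

/-- An awareness structure is serial iff every `R_i` is serial. -/
def serial (M : AwStruct Agt) : Prop := ∀ i s, ∃ t, M.R i s t

end AwStruct

/-- The translation `tr` from `L` to the language of general awareness. -/
def tr {Agt : Type} : Frm Agt → LGA Agt
  | .atom p => .atom p
  | .neg φ => .neg (tr φ)
  | .and φ ψ => .and (tr φ) (tr ψ)
  | .expbel i α => .expk i (tr α)
  | .impbel i φ => .bel i (tr φ)

end LDAPaper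

namespace LDAPaper

section Aux

variable {Agt : Type}

/-! ### Boolean evaluation, Prop-valued -/

/-- Prop-valued version of `boolEval`. -/
def bsatP (v : Frm Agt → Bool) : Frm Agt → Prop
  | .atom p => v (.atom p) = true
  | .neg φ => ¬ bsatP v φ
  | .and φ ψ => bsatP v φ ∧ bsatP v ψ
  | .expbel i α => v (.expbel i α) = true
  | .impbel i φ => v (.impbel i φ) = true

@[simp] lemma bsatP_atom (v : Frm Agt → Bool) (p : ℕ) :
    bsatP v (Frm.atom p) ↔ v (Frm.atom p) = true := Iff.rfl
@[simp] lemma bsatP_neg (v : Frm Agt → Bool) (φ : Frm Agt) :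
    bsatP v (Frm.neg φ) ↔ ¬ bsatP v φ := Iff.rfl
@[simp] lemma bsatP_and (v : Frm Agt → Bool) (φ ψ : Frm Agt) :
    bsatP v (Frm.and φ ψ) ↔ (bsatP v φ ∧ bsatP v ψ) := Iff.rfl
@[simp] lemma bsatP_expbel (v : Frm Agt → Bool) (i : Agt) (α : Frm Agt) :
    bsatP v (Frm.expbel i α) ↔ v (Frm.expbel i α) = true := Iff.rfl
@[simp] lemma bsatP_impbel (v : Frm Agt → Bool) (i : Agt) (φ : Frm Agt) :
    bsatP v (Frm.impbel i φ) ↔ v (Frm.impbel i φ) = true := Iff.rfl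
@[simp] lemma bsatP_imp (v : Frm Agt → Bool) (φ ψ : Frm Agt) :
    bsatP v (Frm.imp φ ψ) ↔ (bsatP v φ → bsatP v ψ) := by
  simp only [Frm.imp, bsatP_neg, bsatP_and]
  tauto

lemma boolEval_eq_true_iff (v : Frm Agt → Bool) :
    ∀ φ : Frm Agt, boolEval v φ = true ↔ bsatP v φ
  | .atom p => Iff.rfl
  | .neg φ => by
      have h := boolEval_eq_true_iff v φ
      constructor
      · intro hn hb
        rw [← h] at hb
        simp [boolEval, hb] at hn
      · intro hn
        cases hb : boolEval v φ
        · simp [boolEval, hb]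
        · exact absurd (h.mp hb) hn
  | .and φ ψ => by
      have h1 := boolEval_eq_true_iff v φ
      have h2 := boolEval_eq_true_iff v ψ
      simp [boolEval, bsatP, h1, h2]
  | .expbel i α => Iff.rfl
  | .impbel i φ => Iff.rfl

lemma tautology_iff (φ : Frm Agt) : Tautology φ ↔ ∀ v : Frm Agt → Bool, bsatP v φ := by
  unfold Tautology
  exact forall_congr' fun v => boolEval_eq_true_iff v φ

lemma bsatP_conjList (v : Frm Agt → Bool) :
    ∀ l : List (Frm Agt), bsatP v (conjList l) ↔ ∀ x ∈ l, bsatP v x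
  | [] => by
      simp only [conjList, bsatP_neg, bsatP_and, bsatP_atom, List.not_mem_nil,
        false_implies, implies_true, iff_true]
      tauto
  | φ :: l => by
      have := bsatP_conjList v l
      simp [conjList, this]

/-! ### `isL` lemmas -/

@[simp] lemma isL_atom (p : ℕ) : (Frm.atom p : Frm Agt).isL := trivial
@[simp] lemma isL_neg_iff (φ : Frm Agt) : (Frm.neg φ).isL ↔ φ.isL := Iff.rfl
@[simp] lemma isL_and_iff (φ ψ : Frm Agt) : (Frm.and φ ψ).isL ↔ φ.isL ∧ ψ.isL := Iff.rfl
@[simp] lemma isL_impbel_iff (i : Agt) (φ : Frm Agt) : (Frm.impbel i φ).isL ↔ φ.isL := Iff.rfl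
@[simp] lemma isL_expbel_iff (i : Agt) (α : Frm Agt) : (Frm.expbel i α).isL ↔ α.isL0 := Iff.rfl
@[simp] lemma isL_imp_iff (φ ψ : Frm Agt) : (Frm.imp φ ψ).isL ↔ φ.isL ∧ ψ.isL := Iff.rfl

lemma isL0_isL : ∀ {α : Frm Agt}, α.isL0 → α.isL
  | .atom _, _ => trivial
  | .neg α, h => isL0_isL (α := α) h
  | .and α β, h => ⟨isL0_isL h.1, isL0_isL h.2⟩
  | .expbel _ α, h => h
  | .impbel _ _, h => h.elim

lemma isL_conjList : ∀ {l : List (Frm Agt)}, (∀ φ ∈ l, φ.isL) → (conjList l).isL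
  | [], _ => by simp [conjList]
  | φ :: l, h => by
      refine ⟨h φ (by simp), isL_conjList fun ψ hψ => h ψ (by simp [hψ])⟩

/-! ### LDA helpers -/

lemma lda_mp1 {χ ψ : Frm Agt} (hχ : χ.isL) (hψ : ψ.isL)
    (ht : Tautology (χ.imp ψ)) (h : LDA χ) : LDA ψ :=
  (LDA.taut (by simp [hχ, hψ]) ht).mp h

lemma lda_mp2 {χ₁ χ₂ ψ : Frm Agt} (h1 : χ₁.isL) (h2 : χ₂.isL) (hψ : ψ.isL)
    (ht : Tautology (χ₁.imp (χ₂.imp ψ))) (d1 : LDA χ₁) (d2 : LDA χ₂) : LDA ψ :=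
  ((LDA.taut (by simp [h1, h2, hψ]) ht).mp d1).mp d2

lemma box_mono (i : Agt) {p q : Frm Agt} (hp : p.isL) (hq : q.isL)
    (h : LDA (p.imp q)) : LDA ((Frm.impbel i p).imp (Frm.impbel i q)) := by
  have hK := LDA.axK i hp hq
  have hN : LDA (Frm.impbel i (p.imp q)) := LDA.nec i h
  refine lda_mp2 (χ₁ := ((Frm.impbel i p).and (Frm.impbel i (p.imp q))).imp (Frm.impbel i q))
    (χ₂ := Frm.impbel i (p.imp q)) ?_ ?_ ?_ ?_ hK hN
  · simp [hp, hq]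
  · simp [hp, hq]
  · simp [hp, hq]
  · rw [tautology_iff]; intro v
    simp only [bsatP_imp, bsatP_and]
    tauto

/-! ### satisfaction helpers -/

variable {M : PreNDM Agt}

@[simp] lemma sat_atom (w : M.W) (p : ℕ) : M.sat w (Frm.atom p) ↔ w ∈ M.V p := Iff.rfl
@[simp] lemma sat_neg (w : M.W) (φ : Frm Agt) : M.sat w (Frm.neg φ) ↔ ¬ M.sat w φ := Iff.rfl
@[simp] lemma sat_and (w : M.W) (φ ψ : Frm Agt) :
    M.sat w (Frm.and φ ψ) ↔ (M.sat w φ ∧ M.sat w ψ) := Iff.rfl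
@[simp] lemma sat_expbel (w : M.W) (i : Agt) (α : Frm Agt) :
    M.sat w (Frm.expbel i α) ↔ α ∈ M.D i w := Iff.rfl
@[simp] lemma sat_impbel (w : M.W) (i : Agt) (φ : Frm Agt) :
    M.sat w (Frm.impbel i φ) ↔ ∀ v ∈ M.N i w, M.sat v φ := Iff.rfl
@[simp] lemma sat_imp (w : M.W) (φ ψ : Frm Agt) :
    M.sat w (Frm.imp φ ψ) ↔ (M.sat w φ → M.sat w ψ) := by
  simp only [Frm.imp, sat_neg, sat_and]; tauto

lemma bsatP_sat (w : M.W) (φ : Frm Agt) :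
    bsatP (fun ψ => @decide (M.sat w ψ) (Classical.propDecidable _)) φ ↔ M.sat w φ := by
  induction φ with
  | atom p => exact @decide_eq_true_iff _ (Classical.propDecidable _)
  | neg φ ih => rw [bsatP_neg, ih]; exact Iff.rfl
  | and φ ψ ih1 ih2 => rw [bsatP_and, ih1, ih2]; exact Iff.rfl
  | expbel i α => exact @decide_eq_true_iff _ (Classical.propDecidable _)
  | impbel i φ _ => exact @decide_eq_true_iff _ (Classical.propDecidable _)

lemma sat_of_tautology {φ : Frm Agt} (h : Tautology φ) (w : M.W) : M.sat w φ := by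
  rw [tautology_iff] at h
  exact (bsatP_sat w φ).mp (h _)

/-! ### Soundness -/

theorem lda_sound {φ : Frm Agt} (h : LDA φ) (hM : isQNDM M) :
    ∀ w : M.W, M.sat w φ := by
  induction h with
  | taut _ ht => exact fun w => sat_of_tautology ht w
  | axK i _ _ =>
      intro w
      rw [sat_imp]
      rintro ⟨h1, h2⟩ v hv
      exact (sat_imp _ _ _).mp (h2 v hv) (h1 v hv)
  | axD i _ =>
      intro w
      rw [sat_neg]
      rintro ⟨h1, h2⟩
      obtain ⟨v, hv⟩ := hM.2.2 i w
      exact (h2 v hv) (h1 v hv)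
  | axInt i _ =>
      intro w
      rw [sat_imp]
      intro hα v hv
      exact hM.2.1 i w v hv _ hα
  | mp _ _ ih1 ih2 =>
      exact fun w => (sat_imp _ _ _).mp (ih1 w) (ih2 w)
  | nec i _ ih =>
      exact fun w v _ => ih v

/-! ### Consistency and MCS facts -/

lemma consistent_subset {Δ Δ' : Set (Frm Agt)} (h : Δ ⊆ Δ') (hc : Consistent Δ') :
    Consistent Δ :=
  fun l hl => hc l fun ψ hψ => h (hl ψ hψ)

section MCSFacts

variable {Γ : Set (Frm Agt)} (hΓ : MCS Γ)

include hΓ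

lemma mcs_isL {φ : Frm Agt} (h : φ ∈ Γ) : φ.isL := hΓ.1 φ h

lemma mcs_not_both {φ : Frm Agt} (h1 : φ ∈ Γ) (h2 : Frm.neg φ ∈ Γ) : False := by
  refine hΓ.2.1 [φ, Frm.neg φ] (by rintro ψ hψ; simp at hψ; rcases hψ with rfl | rfl <;> assumption) ?_
  refine LDA.taut ?_ ?_
  · refine isL_conjList ?_
    rintro ψ hψ; simp at hψ
    rcases hψ with rfl | rfl
    · exact mcs_isL hΓ h1
    · exact mcs_isL hΓ h2
  · rw [tautology_iff]; intro v
    simp only [bsatP_neg, bsatP_conjList]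
    intro hall
    have hh1 := hall φ (by simp)
    have hh2 := hall (Frm.neg φ) (by simp)
    exact (bsatP_neg v φ).mp hh2 hh1

lemma mcs_thm {ψ : Frm Agt} (hd : LDA ψ) (hL : ψ.isL) : ψ ∈ Γ := by
  classical
  have hcons : Consistent (insert ψ Γ) := by
    intro l hl hder
    set l' := l.filter (fun x => decide (x ≠ ψ)) with hl'
    have hl'Γ : ∀ x ∈ l', x ∈ Γ := by
      intro x hx
      rw [hl', List.mem_filter] at hx
      have hne : x ≠ ψ := by simpa using hx.2
      rcases hl x hx.1 with rfl | hxΓ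
      · exact absurd rfl hne
      · exact hxΓ
    refine hΓ.2.1 l' hl'Γ ?_
    refine lda_mp2 (χ₁ := ψ) (χ₂ := Frm.neg (conjList l)) hL ?_ ?_ ?_ hd hder
    · exact isL_conjList fun x hx => by
        rcases hl x hx with rfl | hxΓ
        · exact hL
        · exact mcs_isL hΓ hxΓ
    · exact isL_conjList fun x hx => mcs_isL hΓ (hl'Γ x hx)
    · rw [tautology_iff]; intro v
      simp only [bsatP_imp, bsatP_neg, bsatP_conjList]
      intro hψv hall hall'
      apply hall
      intro x hx
      by_cases hxψ : x = ψ
      · subst hxψ; exact hψv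
      · exact hall' x (by rw [hl', List.mem_filter]; exact ⟨hx, by simpa using hxψ⟩)
  have : insert ψ Γ = Γ := by
    refine hΓ.2.2 _ ?_ hcons (Set.subset_insert _ _)
    rintro φ (rfl | hφΓ)
    · exact hL
    · exact mcs_isL hΓ hφΓ
  rw [← this]; exact Set.mem_insert _ _

lemma mcs_mp {φ ψ : Frm Agt} (h1 : Frm.imp φ ψ ∈ Γ) (h2 : φ ∈ Γ) : ψ ∈ Γ := by
  classical
  have hψL : ψ.isL := ((isL_imp_iff φ ψ).mp (mcs_isL hΓ h1)).2
  have hcons : Consistent (insert ψ Γ) := by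
    intro l hl hder
    set l' := Frm.imp φ ψ :: φ :: l.filter (fun x => decide (x ≠ ψ)) with hl'
    have hl'Γ : ∀ x ∈ l', x ∈ Γ := by
      intro x hx
      rw [hl'] at hx
      rcases List.mem_cons.mp hx with rfl | hx
      · exact h1
      rcases List.mem_cons.mp hx with rfl | hx
      · exact h2
      rw [List.mem_filter] at hx
      have hne : x ≠ ψ := by simpa using hx.2
      rcases hl x hx.1 with rfl | hxΓ
      · exact absurd rfl hne
      · exact hxΓ
    refine hΓ.2.1 l' hl'Γ ?_
    refine lda_mp1 (χ := Frm.neg (conjList l)) ?_ ?_ ?_ hder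
    · exact isL_conjList fun x hx => by
        rcases hl x hx with rfl | hxΓ
        · exact hψL
        · exact mcs_isL hΓ hxΓ
    · exact isL_conjList fun x hx => mcs_isL hΓ (hl'Γ x hx)
    · rw [tautology_iff]; intro v
      simp only [bsatP_imp, bsatP_neg, bsatP_conjList]
      intro hall hall'
      apply hall
      have himp : bsatP v (Frm.imp φ ψ) := hall' _ (by rw [hl']; simp)
      have hφv : bsatP v φ := hall' _ (by rw [hl']; simp)
      have hψv : bsatP v ψ := (bsatP_imp v φ ψ).mp himp hφv
      intro x hx
      by_cases hxψ : x = ψ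
      · subst hxψ; exact hψv
      · refine hall' x ?_
        rw [hl']
        simp only [List.mem_cons, List.mem_filter]
        right; right; exact ⟨hx, by simpa using hxψ⟩
  have : insert ψ Γ = Γ := by
    refine hΓ.2.2 _ ?_ hcons (Set.subset_insert _ _)
    rintro χ (rfl | hχΓ)
    · exact hψL
    · exact mcs_isL hΓ hχΓ
  rw [← this]; exact Set.mem_insert _ _

lemma mcs_neg_mem {φ : Frm Agt} (hL : φ.isL) (h : φ ∉ Γ) : Frm.neg φ ∈ Γ := by
  classical
  have hincons : ¬ Consistent (insert φ Γ) := by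
    intro hc
    have : insert φ Γ = Γ := by
      refine hΓ.2.2 _ ?_ hc (Set.subset_insert _ _)
      rintro χ (rfl | hχΓ)
      · exact hL
      · exact mcs_isL hΓ hχΓ
    exact h (this ▸ Set.mem_insert _ _)
  rw [Consistent] at hincons
  push_neg at hincons
  obtain ⟨l1, hl1, hder1⟩ := hincons
  have hcons : Consistent (insert (Frm.neg φ) Γ) := by
    intro l2 hl2 hder2
    set l' := l1.filter (fun x => decide (x ≠ φ)) ++
      l2.filter (fun x => decide (x ≠ Frm.neg φ)) with hl'
    have hl'Γ : ∀ x ∈ l', x ∈ Γ := by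
      intro x hx
      rw [hl', List.mem_append] at hx
      rcases hx with hx | hx <;> rw [List.mem_filter] at hx
      · have hne : x ≠ φ := by simpa using hx.2
        rcases hl1 x hx.1 with rfl | hxΓ
        · exact absurd rfl hne
        · exact hxΓ
      · have hne : x ≠ Frm.neg φ := by simpa using hx.2
        rcases hl2 x hx.1 with rfl | hxΓ
        · exact absurd rfl hne
        · exact hxΓ
    refine hΓ.2.1 l' hl'Γ ?_
    have hL1 : (conjList l1).isL := isL_conjList fun x hx => by
      rcases hl1 x hx with rfl | hxΓ
      · exact hL
      · exact mcs_isL hΓ hxΓ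
    have hL2 : (conjList l2).isL := isL_conjList fun x hx => by
      rcases hl2 x hx with rfl | hxΓ
      · exact hL
      · exact mcs_isL hΓ hxΓ
    refine lda_mp2 (χ₁ := Frm.neg (conjList l1)) (χ₂ := Frm.neg (conjList l2))
      hL1 hL2 (isL_conjList fun x hx => mcs_isL hΓ (hl'Γ x hx)) ?_ hder1 hder2
    rw [tautology_iff]; intro v
    simp only [bsatP_imp, bsatP_neg, bsatP_conjList]
    intro h1 h2 hall'
    by_cases hv : bsatP v φ
    · apply h1; intro x hx
      by_cases hxφ : x = φ
      · subst hxφ; exact hv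
      · refine hall' x ?_
        rw [hl', List.mem_append]
        left; rw [List.mem_filter]; exact ⟨hx, by simpa using hxφ⟩
    · apply h2; intro x hx
      by_cases hxφ : x = Frm.neg φ
      · subst hxφ; exact hv
      · refine hall' x ?_
        rw [hl', List.mem_append]
        right; rw [List.mem_filter]; exact ⟨hx, by simpa using hxφ⟩
  have : insert (Frm.neg φ) Γ = Γ := by
    refine hΓ.2.2 _ ?_ hcons (Set.subset_insert _ _)
    rintro χ (rfl | hχΓ)
    · exact hL
    · exact mcs_isL hΓ hχΓ
  rw [← this]; exact Set.mem_insert _ _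

lemma mcs_taut_mem {ψ : Frm Agt} (hL : ψ.isL) (ht : Tautology ψ) : ψ ∈ Γ :=
  mcs_thm hΓ (LDA.taut hL ht) hL

lemma mcs_and_iff {φ ψ : Frm Agt} (hφ : φ.isL) (hψ : ψ.isL) :
    Frm.and φ ψ ∈ Γ ↔ (φ ∈ Γ ∧ ψ ∈ Γ) := by
  constructor
  · intro h
    constructor
    · refine mcs_mp hΓ (φ := Frm.and φ ψ) ?_ h
      refine mcs_taut_mem hΓ (by simp [hφ, hψ]) ?_
      rw [tautology_iff]; intro v; simp only [bsatP_imp, bsatP_and]; tauto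
    · refine mcs_mp hΓ (φ := Frm.and φ ψ) ?_ h
      refine mcs_taut_mem hΓ (by simp [hφ, hψ]) ?_
      rw [tautology_iff]; intro v; simp only [bsatP_imp, bsatP_and]; tauto
  · rintro ⟨h1, h2⟩
    refine mcs_mp hΓ (φ := ψ) ?_ h2
    refine mcs_mp hΓ (φ := φ) ?_ h1
    refine mcs_taut_mem hΓ (by simp [hφ, hψ]) ?_
    rw [tautology_iff]; intro v; simp only [bsatP_imp, bsatP_and]; tauto

lemma mcs_box_and {i : Agt} {p q : Frm Agt} (hp : p.isL) (hq : q.isL)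
    (h1 : Frm.impbel i p ∈ Γ) (h2 : Frm.impbel i q ∈ Γ) :
    Frm.impbel i (Frm.and p q) ∈ Γ := by
  have hd : LDA (p.imp (q.imp (Frm.and p q))) := by
    refine LDA.taut (by simp [hp, hq]) ?_
    rw [tautology_iff]; intro v; simp only [bsatP_imp, bsatP_and]; tauto
  have hbm : LDA ((Frm.impbel i p).imp (Frm.impbel i (q.imp (Frm.and p q)))) :=
    box_mono i hp (by simp [hp, hq]) hd
  have h3 : Frm.impbel i (q.imp (Frm.and p q)) ∈ Γ :=
    mcs_mp hΓ (mcs_thm hΓ hbm (by simp [hp, hq])) h1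
  have hK : (((Frm.impbel i q).and (Frm.impbel i (q.imp (Frm.and p q)))).imp
      (Frm.impbel i (Frm.and p q))) ∈ Γ :=
    mcs_thm hΓ (LDA.axK i hq (by simp [hp, hq])) (by simp [hp, hq])
  refine mcs_mp hΓ hK ?_
  exact (mcs_and_iff hΓ (by simp [hq]) (by simp [hp, hq])).mpr ⟨h2, h3⟩

lemma mcs_box_conj {i : Agt} :
    ∀ {l : List (Frm Agt)}, (∀ ψ ∈ l, Frm.impbel i ψ ∈ Γ) →
      Frm.impbel i (conjList l) ∈ Γ
  | [], _ => by
      refine mcs_thm hΓ (LDA.nec i (LDA.taut (by simp [conjList]) ?_)) (by simp [conjList])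
      rw [tautology_iff]; intro v; simp [conjList]
  | ψ :: l, h => by
      have hψ : Frm.impbel i ψ ∈ Γ := h ψ (by simp)
      have hl : Frm.impbel i (conjList l) ∈ Γ :=
        mcs_box_conj fun χ hχ => h χ (by simp [hχ])
      have hψL : ψ.isL := by
        have := mcs_isL hΓ hψ; simpa using this
      have hlL : (conjList l).isL := by
        have := mcs_isL hΓ hl; simpa using this
      exact mcs_box_and hΓ hψL hlL hψ hl

end MCSFacts

/-! ### Lindenbaum -/

lemma chain_bound {c : Set (Set (Frm Agt))} (hchain : IsChain (· ⊆ ·) c)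
    (hne : c.Nonempty) :
    ∀ l : List (Frm Agt), (∀ x ∈ l, x ∈ ⋃₀ c) → ∃ t ∈ c, ∀ x ∈ l, x ∈ t := by
  intro l
  induction l with
  | nil => exact fun _ => ⟨hne.choose, hne.choose_spec, by simp⟩
  | cons a l ih =>
      intro h
      obtain ⟨t, htc, htl⟩ := ih fun x hx => h x (List.mem_cons_of_mem _ hx)
      obtain ⟨s, hsc, has⟩ := h a (List.mem_cons_self (a := a) (l := l))
      by_cases hst : s = t
      · subst hst
        exact ⟨s, hsc, by
          intro x hx
          rcases List.mem_cons.mp hx with rfl | hx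
          · exact has
          · exact htl x hx⟩
      rcases hchain hsc htc hst with h1 | h1
      · exact ⟨t, htc, by
          intro x hx
          rcases List.mem_cons.mp hx with rfl | hx
          · exact h1 has
          · exact htl x hx⟩
      · exact ⟨s, hsc, by
          intro x hx
          rcases List.mem_cons.mp hx with rfl | hx
          · exact has
          · exact h1 (htl x hx)⟩

lemma lindenbaum {Δ : Set (Frm Agt)} (hL : ∀ φ ∈ Δ, φ.isL) (hc : Consistent Δ) :
    ∃ Γ : Set (Frm Agt), MCS Γ ∧ Δ ⊆ Γ := by
  set S : Set (Set (Frm Agt)) := {Δ' | (∀ φ ∈ Δ', φ.isL) ∧ Consistent Δ'} with hS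
  have hzorn : ∀ c ⊆ S, IsChain (· ⊆ ·) c → c.Nonempty →
      ∃ ub ∈ S, ∀ s ∈ c, s ⊆ ub := by
    intro c hcS hchain hne
    refine ⟨⋃₀ c, ⟨?_, ?_⟩, fun s hs => Set.subset_sUnion_of_mem hs⟩
    · rintro φ ⟨t, htc, hφt⟩
      exact (hcS htc).1 φ hφt
    · intro l hl hder
      obtain ⟨t, htc, htl⟩ := chain_bound hchain hne l hl
      exact (hcS htc).2 l htl hder
  obtain ⟨m, hΔm, hmaxm⟩ := zorn_subset_nonempty S hzorn Δ ⟨hL, hc⟩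
  have hmS : m ∈ S := hmaxm.1
  have hmax : ∀ Δ' ∈ S, m ⊆ Δ' → Δ' ⊆ m := fun Δ' hΔ' hsub => hmaxm.2 hΔ' hsub
  refine ⟨m, ⟨hmS.1, hmS.2, ?_⟩, hΔm⟩
  intro Δ' hΔ'L hΔ'c hsub
  exact Set.Subset.antisymm (hmax Δ' ⟨hΔ'L, hΔ'c⟩ hsub) hsub

/-! ### The canonical model is a quasi-NDM; truth lemma -/

lemma canon_consistent_box {i : Agt} {Γ : Set (Frm Agt)} (hΓ : MCS Γ) :
    Consistent {ψ : Frm Agt | Frm.impbel i ψ ∈ Γ} := by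
  intro l hl hder
  have hbox : Frm.impbel i (conjList l) ∈ Γ := mcs_box_conj hΓ fun ψ hψ => hl ψ hψ
  have hLl : (conjList l).isL := isL_conjList fun x hx => by
    have := mcs_isL hΓ (hl x hx); simpa using this
  have hbox2 : Frm.impbel i (Frm.neg (conjList l)) ∈ Γ :=
    mcs_thm hΓ (LDA.nec i hder) (by simpa using hLl)
  have hD : Frm.neg ((Frm.impbel i (conjList l)).and
      (Frm.impbel i (Frm.neg (conjList l)))) ∈ Γ :=
    mcs_thm hΓ (LDA.axD i hLl) (by simp [hLl])
  exact mcs_not_both hΓ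
    ((mcs_and_iff hΓ (by simpa using hLl) (by simpa using hLl)).mpr ⟨hbox, hbox2⟩) hD

lemma canon_qndm_aux {i : Agt} {Γ : Set (Frm Agt)} (hΓ : MCS Γ) :
    ∃ Δ : Set (Frm Agt), MCS Δ ∧ {ψ : Frm Agt | Frm.impbel i ψ ∈ Γ} ⊆ Δ := by
  refine lindenbaum ?_ (canon_consistent_box hΓ)
  intro ψ hψ
  have := mcs_isL hΓ hψ
  simpa using this

lemma truth_lemma : ∀ {φ : Frm Agt}, φ.isL →
    ∀ w : (canonM Agt).W, ((canonM Agt).sat w φ ↔ φ ∈ w.val)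
  | .atom p, _, w => Iff.rfl
  | .neg φ, hL, w => by
      have ih := truth_lemma (φ := φ) hL w
      rw [sat_neg, ih]
      constructor
      · exact fun h => mcs_neg_mem w.2 hL h
      · exact fun h1 h2 => mcs_not_both w.2 h2 h1
  | .and φ ψ, hL, w => by
      have ih1 := truth_lemma (φ := φ) hL.1 w
      have ih2 := truth_lemma (φ := ψ) hL.2 w
      rw [sat_and, ih1, ih2, mcs_and_iff w.2 hL.1 hL.2]
  | .expbel i α, _, w => Iff.rfl
  | .impbel i φ, hL, w => by
      classical
      have hLφ : φ.isL := hL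
      rw [sat_impbel]
      constructor
      · intro h
        by_contra hbox
        -- the set {ψ | □ψ ∈ w} ∪ {¬φ} is consistent
        have hcons : Consistent (insert (Frm.neg φ)
            {ψ : Frm Agt | Frm.impbel i ψ ∈ w.val}) := by
          intro l hl hder
          set l' := l.filter (fun x => decide (x ≠ Frm.neg φ)) with hl'
          have hl'mem : ∀ x ∈ l', Frm.impbel i x ∈ w.val := by
            intro x hx
            rw [hl', List.mem_filter] at hx
            have hne : x ≠ Frm.neg φ := by simpa using hx.2
            rcases hl x hx.1 with rfl | hxm
            · exact absurd rfl hne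
            · exact hxm
          have hLl : (conjList l).isL := isL_conjList fun x hx => by
            rcases hl x hx with rfl | hxm
            · exact hLφ
            · exact mcs_isL (φ := Frm.impbel i x) w.2 hxm
          have hLl' : (conjList l').isL := isL_conjList fun x hx =>
            mcs_isL (φ := Frm.impbel i x) w.2 (hl'mem x hx)
          have himp : LDA ((conjList l').imp φ) := by
            refine lda_mp1 (χ := Frm.neg (conjList l)) (by simpa using hLl)
              (by simp [hLl', hLφ]) ?_ hder
            rw [tautology_iff]; intro v
            simp only [bsatP_imp, bsatP_neg, bsatP_conjList]
            intro hall hall' 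
            by_contra hφv
            apply hall
            intro x hx
            by_cases hxφ : x = Frm.neg φ
            · subst hxφ; exact hφv
            · exact hall' x (by rw [hl', List.mem_filter]
                                exact ⟨hx, by simpa using hxφ⟩)
          have hboxconj : Frm.impbel i (conjList l') ∈ w.val :=
            mcs_box_conj w.2 hl'mem
          have hbm : LDA ((Frm.impbel i (conjList l')).imp (Frm.impbel i φ)) :=
            box_mono i hLl' hLφ himp
          exact hbox (mcs_mp w.2 (mcs_thm w.2 hbm (by simp [hLl', hLφ])) hboxconj)
        have hLins : ∀ ψ ∈ insert (Frm.neg φ) {ψ : Frm Agt | Frm.impbel i ψ ∈ w.val},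
            ψ.isL := by
          rintro ψ (rfl | hψ)
          · exact hLφ
          · exact mcs_isL (φ := Frm.impbel i ψ) w.2 hψ
        obtain ⟨Δ, hΔmcs, hΔsub⟩ := lindenbaum hLins hcons
        have hΔN : (⟨Δ, hΔmcs⟩ : (canonM Agt).W) ∈ (canonM Agt).N i w := by
          intro ψ hψ
          exact hΔsub (Set.mem_insert_of_mem _ hψ)
        have hsatφ := h ⟨Δ, hΔmcs⟩ hΔN
        have hφΔ : φ ∈ Δ := (truth_lemma (φ := φ) hLφ _).mp hsatφ
        exact mcs_not_both hΔmcs hφΔ (hΔsub (Set.mem_insert _ _))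
      · intro h v hv
        exact (truth_lemma (φ := φ) hLφ v).mpr (hv φ h)

lemma canonM_qndm : isQNDM (canonM Agt) := by
  refine ⟨?_, ?_, ?_⟩
  · intro i w α hα
    have := mcs_isL w.2 hα
    simpa using this
  · intro i w v hv α hα
    have hαL0 : α.isL0 := by have := mcs_isL w.2 hα; simpa using this
    have hαL : α.isL := isL0_isL hαL0
    have hInt : (Frm.expbel i α).imp (Frm.impbel i α) ∈ w.val :=
      mcs_thm w.2 (LDA.axInt i hαL0) (by simp [hαL0, hαL])
    have hboxα : Frm.impbel i α ∈ w.val := mcs_mp w.2 hInt hα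
    have hαv : α ∈ v.val := hv α hboxα
    exact (truth_lemma hαL v).mpr hαv
  · intro i w
    obtain ⟨Δ, hΔmcs, hΔsub⟩ := canon_qndm_aux (i := i) w.2
    exact ⟨⟨Δ, hΔmcs⟩, fun ψ hψ => hΔsub hψ⟩

/-! ### Completeness -/

theorem lda_complete {φ : Frm Agt} (hL : φ.isL)
    (h : ∀ M : PreNDM Agt, isQNDM M → ∀ w : M.W, M.sat w φ) : LDA φ := by
  by_contra hnd
  have hcons : Consistent ({Frm.neg φ} : Set (Frm Agt)) := by
    intro l hl hder
    apply hnd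
    refine lda_mp1 (χ := Frm.neg (conjList l)) ?_ hL ?_ hder
    · exact isL_conjList fun x hx => by
        have := hl x hx; simp at this; subst this; simpa using hL
    · rw [tautology_iff]; intro v
      simp only [bsatP_imp, bsatP_neg, bsatP_conjList]
      intro hall
      by_contra hφv
      apply hall
      intro x hx
      have := hl x hx; simp at this; subst this
      exact hφv
  obtain ⟨Γ, hΓmcs, hsub⟩ := lindenbaum (Δ := {Frm.neg φ})
    (by rintro ψ rfl; simpa using hL) hcons
  have hnegφ : Frm.neg φ ∈ Γ := hsub rfl
  have hsat := h (canonM Agt) canonM_qndm ⟨Γ, hΓmcs⟩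
  have hφΓ : φ ∈ Γ := (truth_lemma hL _).mp hsat
  exact mcs_not_both hΓmcs hφΓ hnegφ

end Aux

end LDAPaper

namespace LDAPaper

/-- **Soundness and completeness for quasi-NDMs.** A formula `φ ∈ L` is derivable
in LDA iff `φ` is valid for the class of quasi-notional doxastic models. -/
theorem soundness_completeness_qndm (Agt : Type) [Fintype Agt] (φ : Frm Agt)
    (hφ : φ.isL) :
    LDA φ ↔ ∀ M : PreNDM Agt, isQNDM M → ∀ w : M.W, M.sat w φ := by
  constructor
  · intro h M hM w
    exact lda_sound h hM w
  · exact lda_complete hφ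

end LDAPaper
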